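/- Let z ≥ 1 and let ρ be a density matrix on H ⊗ H such that the SWAP test on ρ accepts with probability at least 1 - 1/z, i.e., Tr(((I+S)/2) ρ) ≥ 1 - 1/z. Then the trace distance between the two reduced states of ρ satisfies (1/2)‖Tr_2(ρ) - Tr_1(ρ)‖_tr ≤ 2/√z + 1/z. -/

import Mathlib

open Finset
open scoped ComplexOrder

noncomputable section

/-- The swap matrix on `H ⊗ H`. -/
def swapMatrix (ι : Type*) [Fintype ι] [DecidableEq ι] : Matrix (ι × ι) (ι × ι) ℂ :=
  Matrix.of fun p q => if p.1 = q.2 ∧ p.2 = q.1 then 1 else 0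

/-- Partial trace over the first tensor factor. -/
def ptraceFst {ι κ : Type*} [Fintype ι] (M : Matrix (ι × κ) (ι × κ) ℂ) : Matrix κ κ ℂ :=
  Matrix.of fun j j' => ∑ i, M (i, j) (i, j')

/-- Partial trace over the second tensor factor. -/
def ptraceSnd {ι κ : Type*} [Fintype κ] (M : Matrix (ι × κ) (ι × κ) ℂ) : Matrix ι ι ℂ :=
  Matrix.of fun i i' => ∑ j, M (i, j) (i', j)

/-- The outer product `|ψ⟩⟨φ|`. -/
def outer {n : Type*} (ψ φ : n → ℂ) : Matrix n n ℂ :=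
  Matrix.of fun p q => ψ p * star (φ q)

/-- The square root of a positive semidefinite matrix (the former `Matrix.PosSemidef.sqrt`). -/
def posSemidefSqrt {n : Type*} [Fintype n] [DecidableEq n] {A : Matrix n n ℂ}
    (hA : A.PosSemidef) : Matrix n n ℂ :=
  hA.1.eigenvectorUnitary.1 * Matrix.diagonal ((↑) ∘ (√·) ∘ hA.1.eigenvalues) *
    (star hA.1.eigenvectorUnitary : Matrix n n ℂ)

/-- The trace norm `‖A‖_tr = Tr √(AᴴA)`. -/
def traceNorm {n : Type*} [Fintype n] [DecidableEq n] (A : Matrix n n ℂ) : ℝ :=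
  ((posSemidefSqrt (Matrix.posSemidef_conjTranspose_mul_self A)).trace).re

/-- The trace distance between two states. -/
def traceDist {n : Type*} [Fintype n] [DecidableEq n] (ρ σ : Matrix n n ℂ) : ℝ :=
  (1 / 2) * traceNorm (ρ - σ)

section Aux

open Matrix Kronecker
set_option linter.unusedSectionVars false
set_option maxHeartbeats 1000000

/-! ### Frobenius inner product and Cauchy–Schwarz -/

variable {n : Type*} [Fintype n] [DecidableEq n]

lemma aux_trace_conjTranspose_mul_self_re (X : Matrix n n ℂ) :
    ((Xᴴ * X).trace).re = ∑ p : n × n, ‖X p.1 p.2‖ ^ 2 := by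
  rw [Matrix.trace, Fintype.sum_prod_type]
  rw [Complex.re_sum]
  rw [Finset.sum_comm]
  refine Finset.sum_congr rfl fun i _ => ?_
  rw [Matrix.diag, Matrix.mul_apply]
  rw [Complex.re_sum]
  refine Finset.sum_congr rfl fun j _ => ?_
  rw [Matrix.conjTranspose_apply]
  rw [Complex.sq_norm, Complex.normSq_apply, Complex.mul_re]
  simp [Complex.conj_re, Complex.conj_im]

lemma aux_trace_cs (X Y : Matrix n n ℂ) :
    ‖(Xᴴ * Y).trace‖ ≤
      Real.sqrt ((Xᴴ * X).trace).re * Real.sqrt ((Yᴴ * Y).trace).re := by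
  let x : EuclideanSpace ℂ (n × n) := WithLp.toLp 2 (fun p : n × n => X p.1 p.2)
  let y : EuclideanSpace ℂ (n × n) := WithLp.toLp 2 (fun p : n × n => Y p.1 p.2)
  have h1 : (Xᴴ * Y).trace = inner ℂ x y := by
    rw [PiLp.inner_apply, Matrix.trace, Fintype.sum_prod_type, Finset.sum_comm]
    refine Finset.sum_congr rfl fun i _ => ?_
    rw [Matrix.diag, Matrix.mul_apply]
    refine Finset.sum_congr rfl fun j _ => ?_
    simp [Matrix.conjTranspose_apply, x, y, RCLike.inner_apply, mul_comm]
  have h2 : Real.sqrt ((Xᴴ * X).trace).re = ‖x‖ := by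
    rw [aux_trace_conjTranspose_mul_self_re, EuclideanSpace.norm_eq]
  have h3 : Real.sqrt ((Yᴴ * Y).trace).re = ‖y‖ := by
    rw [aux_trace_conjTranspose_mul_self_re, EuclideanSpace.norm_eq]
  rw [h1, h2, h3]
  exact norm_inner_le_norm x y

lemma aux_trace_self_re_nonneg (X : Matrix n n ℂ) : 0 ≤ ((Xᴴ * X).trace).re := by
  rw [aux_trace_conjTranspose_mul_self_re]
  positivity

/-! ### Dual characterization of the trace norm of a Hermitian matrix -/

lemma aux_diag_ofReal_herm (f : n → ℝ) :
    (Matrix.diagonal (Complex.ofReal ∘ f))ᴴ = Matrix.diagonal (Complex.ofReal ∘ f) := by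
  rw [Matrix.diagonal_conjTranspose]
  refine congrArg Matrix.diagonal ?_
  funext i
  simp only [Pi.star_apply, Function.comp_apply, RCLike.star_def, Complex.conj_ofReal]

lemma aux_conj_diag_mul (U : Matrix n n ℂ) (hU : star U * U = 1) (f g : n → ℝ) :
    (U * Matrix.diagonal (Complex.ofReal ∘ f) * star U) *
        (U * Matrix.diagonal (Complex.ofReal ∘ g) * star U)
      = U * Matrix.diagonal (Complex.ofReal ∘ fun i => f i * g i) * star U := by
  have h : (U * Matrix.diagonal (Complex.ofReal ∘ f) * star U) *
        (U * Matrix.diagonal (Complex.ofReal ∘ g) * star U)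
      = U * (Matrix.diagonal (Complex.ofReal ∘ f) *
          ((star U * U) * Matrix.diagonal (Complex.ofReal ∘ g))) * star U := by
    noncomm_ring
  rw [h, hU, one_mul, Matrix.diagonal_mul_diagonal]
  refine congrArg (fun D => U * D * star U) ?_
  ext i j
  by_cases hij : i = j <;> simp [Matrix.diagonal_apply, hij]

lemma aux_conj_diag_herm (U : Matrix n n ℂ) (f : n → ℝ) :
    (U * Matrix.diagonal (Complex.ofReal ∘ f) * star U).IsHermitian := by
  unfold Matrix.IsHermitian
  rw [Matrix.star_eq_conjTranspose, Matrix.conjTranspose_mul, Matrix.conjTranspose_mul,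
    Matrix.conjTranspose_conjTranspose, aux_diag_ofReal_herm, Matrix.mul_assoc]

lemma aux_traceNorm_hermitian {A : Matrix n n ℂ} (hA : A.IsHermitian) :
    ∃ W : Matrix n n ℂ, W.IsHermitian ∧ W * W = 1 ∧
      (W * A).trace = ((traceNorm A : ℝ) : ℂ) := by
  set U : Matrix n n ℂ := (hA.eigenvectorUnitary : Matrix n n ℂ) with hUdef
  have hU1 : star U * U = 1 := Matrix.mem_unitaryGroup_iff'.mp hA.eigenvectorUnitary.2
  have hU2 : U * star U = 1 := Matrix.mem_unitaryGroup_iff.mp hA.eigenvectorUnitary.2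
  set lam := hA.eigenvalues with hlam
  set s : n → ℝ := fun i => if 0 ≤ lam i then 1 else -1 with hs
  set W : Matrix n n ℂ := U * Matrix.diagonal (Complex.ofReal ∘ s) * star U with hW
  set B : Matrix n n ℂ :=
    U * Matrix.diagonal (Complex.ofReal ∘ fun i => |lam i|) * star U with hBdef
  have hAspec : A = U * Matrix.diagonal (Complex.ofReal ∘ lam) * star U := by
    have := hA.spectral_theorem
    rw [Unitary.conjStarAlgAut_apply] at this
    exact this
  have hWherm : W.IsHermitian := aux_conj_diag_herm U s
  have hWW : W * W = 1 := by
    rw [hW, aux_conj_diag_mul U hU1]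
    have h1 : (fun i => s i * s i) = fun _ => (1 : ℝ) := by
      funext i
      rw [hs]
      by_cases h : 0 ≤ lam i <;> simp [h]
    rw [h1]
    have h2 : Matrix.diagonal (Complex.ofReal ∘ fun _ : n => (1 : ℝ)) = 1 := by
      have : (Complex.ofReal ∘ fun _ : n => (1 : ℝ)) = fun _ => (1 : ℂ) := by
        funext i; simp
      rw [this, Matrix.diagonal_one]
    rw [h2, mul_one, hU2]
  have hWA : W * A = B := by
    rw [hW, hAspec, aux_conj_diag_mul U hU1, hBdef]
    have h1 : (fun i => s i * lam i) = fun i => |lam i| := by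
      funext i
      rw [hs]
      by_cases h : 0 ≤ lam i
      · simp [h, abs_of_nonneg h]
      · simp [h, abs_of_neg (not_le.mp h)]
    rw [h1]
  have hBpsd : B.PosSemidef := by
    rw [hBdef, Matrix.star_eq_conjTranspose]
    refine Matrix.PosSemidef.mul_mul_conjTranspose_same ?_ U
    rw [Matrix.posSemidef_diagonal_iff]
    intro i
    simp only [Function.comp_apply]
    rw [← Complex.ofReal_zero, Complex.real_le_real]
    exact abs_nonneg _
  have hB2 : B ^ 2 = Aᴴ * A := by
    rw [hA.eq, pow_two, hBdef, hAspec, aux_conj_diag_mul U hU1, aux_conj_diag_mul U hU1]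
    have h1 : (fun i => |lam i| * |lam i|) = fun i => lam i * lam i := by
      funext i
      exact abs_mul_abs_self _
    rw [h1]
  have hsqrt : B = posSemidefSqrt (Matrix.posSemidef_conjTranspose_mul_self A) := by
    have hsa : IsSelfAdjoint A := hA
    have e1 : posSemidefSqrt (Matrix.posSemidef_conjTranspose_mul_self A)
        = cfc Real.sqrt (Aᴴ * A) := by
      rw [(Matrix.posSemidef_conjTranspose_mul_self A).1.cfc_eq, Matrix.IsHermitian.cfc,
        Unitary.conjStarAlgAut_apply]
      rfl
    have e2 : Aᴴ * A = cfc (fun x : ℝ => x * x) A := by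
      rw [cfc_mul (fun x : ℝ => x) (fun x : ℝ => x) A, cfc_id' (R := ℝ) (a := A), hA.eq]
    have e3 : B = cfc (fun x : ℝ => |x|) A := by
      rw [hA.cfc_eq, Matrix.IsHermitian.cfc, Unitary.conjStarAlgAut_apply]
      rfl
    rw [e1, e2, ← cfc_comp Real.sqrt (fun x : ℝ => x * x) A, e3]
    congr 1
    funext x
    exact (Real.sqrt_mul_self_eq_abs x).symm
  have htrB : B.trace = ((∑ i, |lam i| : ℝ) : ℂ) := by
    rw [hBdef, Matrix.trace_mul_comm, ← Matrix.mul_assoc, hU1, one_mul,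
      Matrix.trace_diagonal]
    push_cast
    rfl
  refine ⟨W, hWherm, hWW, ?_⟩
  rw [hWA, htrB]
  unfold traceNorm
  rw [← hsqrt, htrB]
  simp

/-! ### Generic projector algebra -/

variable {R : Type*} [Ring R] [Algebra ℂ R]

lemma aux_p_mul_p (S : R) (hSS : S * S = 1) :
    ((2:ℂ)⁻¹ • (1 + S)) * ((2:ℂ)⁻¹ • (1 + S)) = (2:ℂ)⁻¹ • (1 + S) := by
  have e : (1 + S) * (1 + S) = (2:ℂ) • (1 + S) := by
    have h : (1 + S) * (1 + S) = 1 + S + S + S * S := by noncomm_ring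
    rw [h, hSS, two_smul]
    abel
  rw [smul_mul_assoc, mul_smul_comm, e, smul_smul, smul_smul]
  norm_num

lemma aux_q_mul_q (S : R) (hSS : S * S = 1) :
    ((2:ℂ)⁻¹ • (1 - S)) * ((2:ℂ)⁻¹ • (1 - S)) = (2:ℂ)⁻¹ • (1 - S) := by
  have e : (1 - S) * (1 - S) = (2:ℂ) • (1 - S) := by
    have h : (1 - S) * (1 - S) = 1 - S - S + S * S := by noncomm_ring
    rw [h, hSS, two_smul]
    abel
  rw [smul_mul_assoc, mul_smul_comm, e, smul_smul, smul_smul]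
  norm_num

lemma aux_q_eq_one_sub_p (S : R) :
    (2:ℂ)⁻¹ • (1 - S) = 1 - (2:ℂ)⁻¹ • (1 + S) := by
  have : ((2:ℂ)⁻¹ + (2:ℂ)⁻¹) = 1 := by norm_num
  rw [smul_sub, smul_add, sub_eq_iff_eq_add]
  rw [show (1 : R) = ((2:ℂ)⁻¹ + (2:ℂ)⁻¹) • (1 : R) by rw [this, one_smul]]
  module

lemma aux_pdp_zero (S D : R) (hSS : S * S = 1) (hSD : S * D = -(D * S)) :
    ((2:ℂ)⁻¹ • (1 + S)) * D * ((2:ℂ)⁻¹ • (1 + S)) = 0 := by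
  have e2 : S * (D * S) = -D := by
    rw [← mul_assoc, hSD, neg_mul, mul_assoc, hSS, mul_one]
  have e1 : (1 + S) * D * (1 + S) = D + D * S + S * D + S * (D * S) := by
    noncomm_ring
  rw [smul_mul_assoc, smul_mul_assoc, mul_smul_comm, smul_smul, e1, hSD, e2]
  have : D + D * S + -(D * S) + -D = 0 := by abel
  rw [this, smul_zero]

lemma aux_qdq_zero (S D : R) (hSS : S * S = 1) (hSD : S * D = -(D * S)) :
    ((2:ℂ)⁻¹ • (1 - S)) * D * ((2:ℂ)⁻¹ • (1 - S)) = 0 := by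
  have e2 : S * (D * S) = -D := by
    rw [← mul_assoc, hSD, neg_mul, mul_assoc, hSS, mul_one]
  have e1 : (1 - S) * D * (1 - S) = D - D * S - S * D + S * (D * S) := by
    noncomm_ring
  rw [smul_mul_assoc, smul_mul_assoc, mul_smul_comm, smul_smul, e1, hSD, e2]
  have : D - D * S - -(D * S) + -D = 0 := by abel
  rw [this, smul_zero]

lemma aux_d_split (P Q D : R) (hPQ : P + Q = 1) (h1 : P * D * P = 0) (h2 : Q * D * Q = 0) :
    D = P * D * Q + Q * D * P := by
  have h : (P + Q) * D * (P + Q) = P * D * P + P * D * Q + (Q * D * P + Q * D * Q) := by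
    noncomm_ring
  rw [hPQ, one_mul, mul_one, h1, h2, zero_add, add_zero] at h
  exact h

lemma aux_cd_sq (K L T : R) (hKK : K * K = 1) (hLL : L * L = 1) (hKL : K * L = T)
    (hLK : L * K = T) (hTT : T * T = 1) :
    (1 + T) * (1 + T) + (K - L) * (K - L) = (4:ℂ) • (1 : R) := by
  have e1 : (1 + T) * (1 + T) = 1 + T + T + T * T := by noncomm_ring
  have e2 : (K - L) * (K - L) = K * K - K * L - L * K + L * L := by noncomm_ring
  rw [e1, e2, hKK, hKL, hLK, hLL, hTT]
  have : (4:ℂ) • (1 : R) = 1 + 1 + 1 + 1 := by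
    rw [show (4:ℂ) = 1 + 1 + 1 + 1 by norm_num]
    simp [add_smul]
  rw [this]
  abel

lemma aux_quad_ident (C D P M : R) (hCD : C * C + D * D = (4:ℂ) • (1 : R)) (hPP : P * P = P) :
    M * P * C * (C * P * M) + M * P * D * (D * P * M) = (4:ℂ) • (M * P * M) := by
  have h : M * P * C * (C * P * M) + M * P * D * (D * P * M)
      = M * P * ((C * C + D * D) * (P * M)) := by noncomm_ring
  rw [h, hCD, smul_mul_assoc, one_mul, mul_smul_comm]
  congr 1
  rw [← mul_assoc, mul_assoc M P P, hPP]

/-! ### Swap matrix and partial traces -/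

variable {ι : Type*} [Fintype ι] [DecidableEq ι]

lemma aux_swap_mul (A : Matrix (ι × ι) (ι × ι) ℂ) :
    swapMatrix ι * A = Matrix.of fun p q => A (p.2, p.1) q := by
  ext p q
  rw [Matrix.mul_apply]
  rw [Finset.sum_eq_single ((p.2, p.1) : ι × ι)]
  · simp [swapMatrix]
  · rintro r - hr
    simp only [swapMatrix, Matrix.of_apply]
    rw [if_neg, zero_mul]
    rintro ⟨h1, h2⟩
    exact hr (Prod.ext_iff.mpr ⟨h2.symm, h1.symm⟩)
  · intro h
    exact absurd (Finset.mem_univ _) h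

lemma aux_mul_swap (A : Matrix (ι × ι) (ι × ι) ℂ) :
    A * swapMatrix ι = Matrix.of fun p q => A p (q.2, q.1) := by
  ext p q
  rw [Matrix.mul_apply]
  rw [Finset.sum_eq_single ((q.2, q.1) : ι × ι)]
  · simp [swapMatrix]
  · rintro r - hr
    simp only [swapMatrix, Matrix.of_apply]
    rw [if_neg, mul_zero]
    rintro ⟨h1, h2⟩
    exact hr (Prod.ext_iff.mpr ⟨h1, h2⟩)
  · intro h
    exact absurd (Finset.mem_univ _) h

lemma aux_swap_herm : (swapMatrix ι).IsHermitian := by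
  unfold Matrix.IsHermitian
  ext p q
  simp only [Matrix.conjTranspose_apply, swapMatrix, Matrix.of_apply, apply_ite star,
    star_one, star_zero]
  by_cases h : p.1 = q.2 ∧ p.2 = q.1
  · rw [if_pos ⟨h.2.symm, h.1.symm⟩, if_pos h]
  · rw [if_neg, if_neg h]
    rintro ⟨h1, h2⟩
    exact h ⟨h2.symm, h1.symm⟩

lemma aux_swap_swap : swapMatrix ι * swapMatrix ι = 1 := by
  rw [aux_swap_mul]
  ext p q
  simp only [swapMatrix, Matrix.of_apply, Matrix.one_apply, Prod.ext_iff]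
  by_cases h : p.1 = q.1 ∧ p.2 = q.2
  · rw [if_pos ⟨h.2, h.1⟩, if_pos h]
  · rw [if_neg, if_neg h]
    rintro ⟨h1, h2⟩
    exact h ⟨h2, h1⟩

lemma aux_kron_conjT (A B : Matrix ι ι ℂ) : (A ⊗ₖ B)ᴴ = Aᴴ ⊗ₖ Bᴴ := by
  ext p q
  simp only [Matrix.conjTranspose_apply, Matrix.kroneckerMap_apply, star_mul']

lemma aux_swap_kron (W : Matrix ι ι ℂ) :
    swapMatrix ι * (W ⊗ₖ (1 : Matrix ι ι ℂ)) = ((1 : Matrix ι ι ℂ) ⊗ₖ W) * swapMatrix ι := by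
  rw [aux_swap_mul, aux_mul_swap]
  ext p q
  simp only [Matrix.of_apply, Matrix.kroneckerMap_apply]
  exact mul_comm _ _

lemma aux_swap_kron' (W : Matrix ι ι ℂ) :
    swapMatrix ι * ((1 : Matrix ι ι ℂ) ⊗ₖ W) = (W ⊗ₖ (1 : Matrix ι ι ℂ)) * swapMatrix ι := by
  rw [aux_swap_mul, aux_mul_swap]
  ext p q
  simp only [Matrix.of_apply, Matrix.kroneckerMap_apply]
  exact mul_comm _ _

lemma aux_trace_kron_fst (W : Matrix ι ι ℂ) (ρ : Matrix (ι × ι) (ι × ι) ℂ) :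
    ((W ⊗ₖ (1 : Matrix ι ι ℂ)) * ρ).trace = (W * ptraceSnd ρ).trace := by
  have L : ((W ⊗ₖ (1 : Matrix ι ι ℂ)) * ρ).trace
      = ∑ i, ∑ j, ∑ a, W i a * ρ (a, j) (i, j) := by
    rw [Matrix.trace, Fintype.sum_prod_type]
    refine Finset.sum_congr rfl fun i _ => Finset.sum_congr rfl fun j _ => ?_
    rw [Matrix.diag_apply, Matrix.mul_apply, Fintype.sum_prod_type]
    refine Finset.sum_congr rfl fun a _ => ?_
    rw [Finset.sum_eq_single j]
    · simp
    · intro b _ hb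
      simp [Matrix.one_apply, hb.symm]
    · intro h
      exact absurd (Finset.mem_univ _) h
  have R : (W * ptraceSnd ρ).trace = ∑ i, ∑ a, ∑ j, W i a * ρ (a, j) (i, j) := by
    rw [Matrix.trace]
    refine Finset.sum_congr rfl fun i _ => ?_
    rw [Matrix.diag_apply, Matrix.mul_apply]
    refine Finset.sum_congr rfl fun a _ => ?_
    simp only [ptraceSnd, Matrix.of_apply]
    rw [Finset.mul_sum]
  rw [L, R]
  exact Finset.sum_congr rfl fun i _ => Finset.sum_comm

lemma aux_trace_kron_snd (W : Matrix ι ι ℂ) (ρ : Matrix (ι × ι) (ι × ι) ℂ) :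
    (((1 : Matrix ι ι ℂ) ⊗ₖ W) * ρ).trace = (W * ptraceFst ρ).trace := by
  have L : (((1 : Matrix ι ι ℂ) ⊗ₖ W) * ρ).trace
      = ∑ i, ∑ j, ∑ b, W j b * ρ (i, b) (i, j) := by
    rw [Matrix.trace, Fintype.sum_prod_type]
    refine Finset.sum_congr rfl fun i _ => Finset.sum_congr rfl fun j _ => ?_
    rw [Matrix.diag_apply, Matrix.mul_apply, Fintype.sum_prod_type, Finset.sum_comm]
    refine Finset.sum_congr rfl fun b _ => ?_
    rw [Finset.sum_eq_single i]
    · simp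
    · intro a _ ha
      simp [Matrix.one_apply, ha.symm]
    · intro h
      exact absurd (Finset.mem_univ _) h
  have R : (W * ptraceFst ρ).trace = ∑ j, ∑ b, ∑ i, W j b * ρ (i, b) (i, j) := by
    rw [Matrix.trace]
    refine Finset.sum_congr rfl fun j _ => ?_
    rw [Matrix.diag_apply, Matrix.mul_apply]
    refine Finset.sum_congr rfl fun b _ => ?_
    simp only [ptraceFst, Matrix.of_apply]
    rw [Finset.mul_sum]
  rw [L, R, Finset.sum_comm]
  exact Finset.sum_congr rfl fun j _ => Finset.sum_comm

lemma aux_ptraceSnd_herm {ρ : Matrix (ι × ι) (ι × ι) ℂ} (h : ρ.IsHermitian) :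
    (ptraceSnd ρ).IsHermitian := by
  unfold Matrix.IsHermitian
  ext i i'
  simp only [Matrix.conjTranspose_apply, ptraceSnd, Matrix.of_apply, star_sum]
  refine Finset.sum_congr rfl fun j _ => ?_
  rw [← Matrix.conjTranspose_apply, h.eq]

lemma aux_ptraceFst_herm {ρ : Matrix (ι × ι) (ι × ι) ℂ} (h : ρ.IsHermitian) :
    (ptraceFst ρ).IsHermitian := by
  unfold Matrix.IsHermitian
  ext j j'
  simp only [Matrix.conjTranspose_apply, ptraceFst, Matrix.of_apply, star_sum]
  refine Finset.sum_congr rfl fun i _ => ?_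
  rw [← Matrix.conjTranspose_apply, h.eq]

end Aux

open Matrix Kronecker in
set_option maxHeartbeats 2000000 in
/-- If the SWAP test on a density matrix `ρ` accepts with probability at least
`1 - 1/z` for `z ≥ 1`, then the trace distance between the two reduced states of
`ρ` is at most `2/√z + 1/z`. -/
theorem stmt_8 {ι : Type*} [Fintype ι] [DecidableEq ι] (z : ℝ) (hz : 1 ≤ z)
    (ρ : Matrix (ι × ι) (ι × ι) ℂ) (hρ : ρ.PosSemidef) (htr : ρ.trace = 1)
    (hacc : ((((2 : ℂ)⁻¹ • (1 + swapMatrix ι)) * ρ).trace).re ≥ 1 - 1 / z) :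
    (1 / 2) * traceNorm (ptraceSnd ρ - ptraceFst ρ) ≤ 2 / Real.sqrt z + 1 / z := by
  have hz0 : 0 < z := lt_of_lt_of_le one_pos hz
  have hσh : (ptraceSnd ρ - ptraceFst ρ).IsHermitian :=
    (aux_ptraceSnd_herm hρ.1).sub (aux_ptraceFst_herm hρ.1)
  obtain ⟨W, hWh, hWW, hWtr⟩ := aux_traceNorm_hermitian hσh
  set M : Matrix (ι × ι) (ι × ι) ℂ := posSemidefSqrt hρ with hMdef
  have hMM : M * M = ρ := by
    rw [hMdef, posSemidefSqrt,
      aux_conj_diag_mul _ (Matrix.mem_unitaryGroup_iff'.mp hρ.1.eigenvectorUnitary.2)]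
    simp only [Function.comp_apply, Real.mul_self_sqrt, hρ.eigenvalues_nonneg]
    conv_rhs => rw [hρ.1.spectral_theorem, Unitary.conjStarAlgAut_apply]
    rfl
  have hMh : Mᴴ = M := by
    have h : M.IsHermitian := aux_conj_diag_herm _ _
    exact h.eq
  set K : Matrix (ι × ι) (ι × ι) ℂ := W ⊗ₖ (1 : Matrix ι ι ℂ) with hKdef
  set L : Matrix (ι × ι) (ι × ι) ℂ := (1 : Matrix ι ι ℂ) ⊗ₖ W with hLdef
  set P : Matrix (ι × ι) (ι × ι) ℂ := (2:ℂ)⁻¹ • (1 + swapMatrix ι) with hPdef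
  set Q : Matrix (ι × ι) (ι × ι) ℂ := (2:ℂ)⁻¹ • (1 - swapMatrix ι) with hQdef
  have hSS : swapMatrix ι * swapMatrix ι = 1 := aux_swap_swap
  -- Kronecker algebra
  have hKK : K * K = 1 := by
    rw [hKdef, ← Matrix.mul_kronecker_mul, hWW, one_mul, Matrix.one_kronecker_one]
  have hLL : L * L = 1 := by
    rw [hLdef, ← Matrix.mul_kronecker_mul, hWW, one_mul, Matrix.one_kronecker_one]
  have hKL : K * L = W ⊗ₖ W := by
    rw [hKdef, hLdef, ← Matrix.mul_kronecker_mul, mul_one, one_mul]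
  have hLK : L * K = W ⊗ₖ W := by
    rw [hKdef, hLdef, ← Matrix.mul_kronecker_mul, mul_one, one_mul]
  have hTT : (W ⊗ₖ W) * (W ⊗ₖ W) = 1 := by
    rw [← Matrix.mul_kronecker_mul, hWW, Matrix.one_kronecker_one]
  have hSD : swapMatrix ι * (K - L) = -((K - L) * swapMatrix ι) := by
    rw [mul_sub, sub_mul, hKdef, hLdef, aux_swap_kron, aux_swap_kron']
    abel
  -- Projector algebra
  have hPP : P * P = P := by rw [hPdef]; exact aux_p_mul_p _ hSS
  have hQQ : Q * Q = Q := by rw [hQdef]; exact aux_q_mul_q _ hSS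
  have hQ1P : Q = 1 - P := by rw [hQdef, hPdef]; exact aux_q_eq_one_sub_p _
  have hPQ : P + Q = 1 := by rw [hQ1P]; abel
  have hPDP : P * (K - L) * P = 0 := by rw [hPdef]; exact aux_pdp_zero _ _ hSS hSD
  have hQDQ : Q * (K - L) * Q = 0 := by rw [hQdef]; exact aux_qdq_zero _ _ hSS hSD
  have hDsplit : K - L = P * (K - L) * Q + Q * (K - L) * P :=
    aux_d_split _ _ _ hPQ hPDP hQDQ
  -- Hermitian facts
  have hPh : Pᴴ = P := by
    rw [hPdef, Matrix.conjTranspose_smul, Matrix.conjTranspose_add,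
      Matrix.conjTranspose_one, aux_swap_herm.eq]
    norm_num
  have hQh : Qᴴ = Q := by
    rw [hQdef, Matrix.conjTranspose_smul, Matrix.conjTranspose_sub,
      Matrix.conjTranspose_one, aux_swap_herm.eq]
    norm_num
  have hDh : (K - L)ᴴ = K - L := by
    rw [Matrix.conjTranspose_sub, hKdef, hLdef, aux_kron_conjT, aux_kron_conjT, hWh.eq,
      Matrix.conjTranspose_one]
  have hCh : (1 + W ⊗ₖ W)ᴴ = 1 + W ⊗ₖ W := by
    rw [Matrix.conjTranspose_add, Matrix.conjTranspose_one, aux_kron_conjT, hWh.eq]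
  have hCD : (1 + W ⊗ₖ W) * (1 + W ⊗ₖ W) + (K - L) * (K - L) = (4:ℂ) • 1 :=
    aux_cd_sq K L (W ⊗ₖ W) hKK hLL hKL hLK hTT
  -- Trace identities
  have key0 : (W * (ptraceSnd ρ - ptraceFst ρ)).trace = ((K - L) * ρ).trace := by
    rw [mul_sub, Matrix.trace_sub, sub_mul, Matrix.trace_sub, hKdef, hLdef,
      aux_trace_kron_fst, aux_trace_kron_snd]
  have key1 : ((K - L) * ρ).trace
      = ((P * (K - L) * Q) * ρ).trace + ((Q * (K - L) * P) * ρ).trace := by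
    conv_lhs => rw [hDsplit]
    rw [add_mul, Matrix.trace_add]
  have cyc1 : (((K - L) * P * M)ᴴ * (Q * M)).trace = ((P * (K - L) * Q) * ρ).trace := by
    have e : ((K - L) * P * M)ᴴ * (Q * M) = M * ((P * (K - L) * Q) * M) := by
      rw [Matrix.conjTranspose_mul, Matrix.conjTranspose_mul, hMh, hPh, hDh]
      noncomm_ring
    rw [e, Matrix.trace_mul_comm, ← hMM]
    congr 1
    noncomm_ring
  have cyc2 : (((K - L) * Q * M)ᴴ * (P * M)).trace = ((Q * (K - L) * P) * ρ).trace := by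
    have e : ((K - L) * Q * M)ᴴ * (P * M) = M * ((Q * (K - L) * P) * M) := by
      rw [Matrix.conjTranspose_mul, Matrix.conjTranspose_mul, hMh, hQh, hDh]
      noncomm_ring
    rw [e, Matrix.trace_mul_comm, ← hMM]
    congr 1
    noncomm_ring
  have gQ : ((Q * M)ᴴ * (Q * M)).trace = (Q * ρ).trace := by
    have e : (Q * M)ᴴ * (Q * M) = M * (Q * M) := by
      rw [Matrix.conjTranspose_mul, hMh, hQh]
      calc M * Q * (Q * M) = M * ((Q * Q) * M) := by noncomm_ring
        _ = M * (Q * M) := by rw [hQQ]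
    rw [e, Matrix.trace_mul_comm, ← hMM]
    congr 1
    noncomm_ring
  have gP : ((P * M)ᴴ * (P * M)).trace = (P * ρ).trace := by
    have e : (P * M)ᴴ * (P * M) = M * (P * M) := by
      rw [Matrix.conjTranspose_mul, hMh, hPh]
      calc M * P * (P * M) = M * ((P * P) * M) := by noncomm_ring
        _ = M * (P * M) := by rw [hPP]
    rw [e, Matrix.trace_mul_comm, ← hMM]
    congr 1
    noncomm_ring
  -- scalar facts
  have hQρtr : (Q * ρ).trace = 1 - (P * ρ).trace := by
    rw [hQ1P, sub_mul, Matrix.trace_sub, one_mul, htr]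
  have hQre_eq : ((Q * ρ).trace).re = 1 - ((P * ρ).trace).re := by
    rw [hQρtr, Complex.sub_re, Complex.one_re]
  have hQre_le : ((Q * ρ).trace).re ≤ 1 / z := by
    rw [hQre_eq]
    linarith [hacc]
  have hQre_0 : 0 ≤ ((Q * ρ).trace).re := by
    rw [← gQ]
    exact aux_trace_self_re_nonneg _
  have hPre_le : ((P * ρ).trace).re ≤ 1 := by linarith [hQre_eq, hQre_0]
  -- quadratic bounds
  have quadP : ((((K - L) * P * M)ᴴ * ((K - L) * P * M)).trace).re
      ≤ 4 * ((P * ρ).trace).re := by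
    have hq := aux_quad_ident (1 + W ⊗ₖ W) (K - L) P M hCD hPP
    have e1 : ((K - L) * P * M)ᴴ * ((K - L) * P * M)
        = M * P * (K - L) * ((K - L) * P * M) := by
      rw [Matrix.conjTranspose_mul, Matrix.conjTranspose_mul, hMh, hPh, hDh]
      noncomm_ring
    have e2 : ((1 + W ⊗ₖ W) * P * M)ᴴ * ((1 + W ⊗ₖ W) * P * M)
        = M * P * (1 + W ⊗ₖ W) * ((1 + W ⊗ₖ W) * P * M) := by
      rw [Matrix.conjTranspose_mul, Matrix.conjTranspose_mul, hMh, hPh, hCh]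
      noncomm_ring
    have eM : (M * P * M).trace = (P * ρ).trace := by
      rw [mul_assoc, Matrix.trace_mul_comm, ← hMM]
      congr 1
      noncomm_ring
    have t := congrArg Matrix.trace hq
    rw [Matrix.trace_add, Matrix.trace_smul, eM, smul_eq_mul, ← e1, ← e2] at t
    have h4 : ((4:ℂ) * (P * ρ).trace).re = 4 * ((P * ρ).trace).re := by
      rw [show (4:ℂ) = ((4:ℝ):ℂ) by norm_num]
      simp [Complex.mul_re]
    have tre := congrArg Complex.re t
    rw [Complex.add_re, h4] at tre
    have hC0 := aux_trace_self_re_nonneg ((1 + W ⊗ₖ W) * P * M)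
    linarith [tre, hC0]
  have quadQ : ((((K - L) * Q * M)ᴴ * ((K - L) * Q * M)).trace).re
      ≤ 4 * ((Q * ρ).trace).re := by
    have hq := aux_quad_ident (1 + W ⊗ₖ W) (K - L) Q M hCD hQQ
    have e1 : ((K - L) * Q * M)ᴴ * ((K - L) * Q * M)
        = M * Q * (K - L) * ((K - L) * Q * M) := by
      rw [Matrix.conjTranspose_mul, Matrix.conjTranspose_mul, hMh, hQh, hDh]
      noncomm_ring
    have e2 : ((1 + W ⊗ₖ W) * Q * M)ᴴ * ((1 + W ⊗ₖ W) * Q * M)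
        = M * Q * (1 + W ⊗ₖ W) * ((1 + W ⊗ₖ W) * Q * M) := by
      rw [Matrix.conjTranspose_mul, Matrix.conjTranspose_mul, hMh, hQh, hCh]
      noncomm_ring
    have eM : (M * Q * M).trace = (Q * ρ).trace := by
      rw [mul_assoc, Matrix.trace_mul_comm, ← hMM]
      congr 1
      noncomm_ring
    have t := congrArg Matrix.trace hq
    rw [Matrix.trace_add, Matrix.trace_smul, eM, smul_eq_mul, ← e1, ← e2] at t
    have h4 : ((4:ℂ) * (Q * ρ).trace).re = 4 * ((Q * ρ).trace).re := by
      rw [show (4:ℂ) = ((4:ℝ):ℂ) by norm_num]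
      simp [Complex.mul_re]
    have tre := congrArg Complex.re t
    rw [Complex.add_re, h4] at tre
    have hC0 := aux_trace_self_re_nonneg ((1 + W ⊗ₖ W) * Q * M)
    linarith [tre, hC0]
  -- Cauchy–Schwarz bounds
  have sqrt4 : Real.sqrt 4 = 2 := by
    rw [show (4:ℝ) = 2 ^ 2 by norm_num, Real.sqrt_sq (by norm_num : (0:ℝ) ≤ 2)]
  have cs1 : ‖((P * (K - L) * Q) * ρ).trace‖ ≤ 2 * Real.sqrt (1 / z) := by
    rw [← cyc1]
    refine le_trans (aux_trace_cs ((K - L) * P * M) (Q * M)) ?_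
    have b1 : Real.sqrt ((((K - L) * P * M)ᴴ * ((K - L) * P * M)).trace).re ≤ 2 := by
      calc Real.sqrt ((((K - L) * P * M)ᴴ * ((K - L) * P * M)).trace).re
          ≤ Real.sqrt 4 := Real.sqrt_le_sqrt (by nlinarith [quadP, hPre_le])
        _ = 2 := sqrt4
    have b2 : Real.sqrt (((Q * M)ᴴ * (Q * M)).trace).re ≤ Real.sqrt (1 / z) := by
      refine Real.sqrt_le_sqrt ?_
      rw [gQ]
      exact hQre_le
    exact mul_le_mul b1 b2 (Real.sqrt_nonneg _) (by norm_num)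
  have cs2 : ‖((Q * (K - L) * P) * ρ).trace‖ ≤ 2 * Real.sqrt (1 / z) := by
    rw [← cyc2]
    refine le_trans (aux_trace_cs ((K - L) * Q * M) (P * M)) ?_
    have b1 : Real.sqrt ((((K - L) * Q * M)ᴴ * ((K - L) * Q * M)).trace).re
        ≤ 2 * Real.sqrt (1 / z) := by
      calc Real.sqrt ((((K - L) * Q * M)ᴴ * ((K - L) * Q * M)).trace).re
          ≤ Real.sqrt (4 * (1 / z)) := Real.sqrt_le_sqrt (by nlinarith [quadQ, hQre_le])
        _ = 2 * Real.sqrt (1 / z) := by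
            rw [Real.sqrt_mul (by norm_num : (0:ℝ) ≤ 4), sqrt4]
    have b2 : Real.sqrt (((P * M)ᴴ * (P * M)).trace).re ≤ 1 := by
      calc Real.sqrt (((P * M)ᴴ * (P * M)).trace).re
          ≤ Real.sqrt 1 := Real.sqrt_le_sqrt (by rw [gP]; exact hPre_le)
        _ = 1 := Real.sqrt_one
    calc Real.sqrt ((((K - L) * Q * M)ᴴ * ((K - L) * Q * M)).trace).re
          * Real.sqrt (((P * M)ᴴ * (P * M)).trace).re
        ≤ (2 * Real.sqrt (1 / z)) * 1 :=
          mul_le_mul b1 b2 (Real.sqrt_nonneg _) (by positivity)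
      _ = 2 * Real.sqrt (1 / z) := by ring
  -- Final assembly
  have treq : traceNorm (ptraceSnd ρ - ptraceFst ρ)
      = ((W * (ptraceSnd ρ - ptraceFst ρ)).trace).re := by
    rw [hWtr, Complex.ofReal_re]
  have hbound : traceNorm (ptraceSnd ρ - ptraceFst ρ) ≤ 4 * Real.sqrt (1 / z) := by
    rw [treq, key0, key1]
    calc (((P * (K - L) * Q) * ρ).trace + ((Q * (K - L) * P) * ρ).trace).re
        ≤ ‖((P * (K - L) * Q) * ρ).trace + ((Q * (K - L) * P) * ρ).trace‖ :=
          Complex.re_le_norm _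
      _ ≤ ‖((P * (K - L) * Q) * ρ).trace‖ + ‖((Q * (K - L) * P) * ρ).trace‖ :=
          norm_add_le _ _
      _ ≤ 2 * Real.sqrt (1 / z) + 2 * Real.sqrt (1 / z) := add_le_add cs1 cs2
      _ = 4 * Real.sqrt (1 / z) := by ring
  have hsz : Real.sqrt (1 / z) = 1 / Real.sqrt z := by
    rw [one_div, Real.sqrt_inv, one_div]
  have hzinv : 0 ≤ 1 / z := by positivity
  have : (1 / 2) * traceNorm (ptraceSnd ρ - ptraceFst ρ) ≤ 2 * (1 / Real.sqrt z) := by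
    rw [← hsz]
    linarith [hbound]
  calc (1 / 2) * traceNorm (ptraceSnd ρ - ptraceFst ρ) ≤ 2 * (1 / Real.sqrt z) := this
    _ = 2 / Real.sqrt z := by ring
    _ ≤ 2 / Real.sqrt z + 1 / z := by linarith

end
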